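/- Let X be a smooth projective surface, F a line bundle on X, and E a locally free sheaf with a resolution 0 → U → V → E → 0 where U = ⊕_{i≤j} A_i^{a_i} and V = ⊕_{i>j} A_i^{a_i}. Assume Ext¹(A_i, A_s ⊗ F⁻¹) = 0 for all i ≤ j < s ≤ m and Ext²(A_i, A_s ⊗ F⁻¹) = 0 for all j < i, s ≤ m. Then Ext²(E, E ⊗ F⁻¹) = 0, i.e., E is F-prioritary. -/

import Mathlib

/-!
STATEMENT 8: Let X be a smooth projective surface, F a line bundle on X, and
E a locally free sheaf with a resolution 0 → U → V → E → 0 where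
U = ⊕_{i≤j} A_i^{a_i} and V = ⊕_{i>j} A_i^{a_i}.  Assume
Ext¹(A_i, A_s ⊗ F⁻¹) = 0 for all i ≤ j < s ≤ m and
Ext²(A_i, A_s ⊗ F⁻¹) = 0 for all j < i, s ≤ m.  Then
Ext²(E, E ⊗ F⁻¹) = 0, i.e. E is F-prioritary.

We work in the abelian category C of coherent sheaves on X.  Tensoring by
the line bundle F⁻¹ is an exact additive endofunctor T of C; exactness is
recorded by the hypothesis that T maps the given short exact sequence to a
short exact sequence.  Since X is a surface, Ext³ vanishes identically
(hypothesis `hdim3`).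
-/

open CategoryTheory CategoryTheory.Limits CategoryTheory.Abelian

universe w v u

namespace PrioritaryAux

variable {C : Type u} [Category.{v} C] [Abelian C] [HasExt.{w} C]

lemma mk₀_add {X Y : C} (f g : X ⟶ Y) :
    Ext.mk₀ (f + g) = (Ext.mk₀ f + Ext.mk₀ g : Ext.{w} X Y 0) := by
  letI := HasDerivedCategory.standard C
  ext
  simp [ShiftedHom.mk₀, Functor.map_add, Preadditive.add_comp]

/-- `mk₀` as an additive hom. -/
noncomputable def mk₀Hom (X Y : C) : (X ⟶ Y) →+ Ext.{w} X Y 0 :=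
  AddMonoidHom.mk' Ext.mk₀ mk₀_add

lemma subsingleton_ext_left {ι : Type*} [Fintype ι] {W : C} {Wi : ι → C}
    (p : ∀ i, W ⟶ Wi i) (q : ∀ i, Wi i ⟶ W)
    (htot : ∑ i, p i ≫ q i = 𝟙 W) (Y : C) (n : ℕ)
    (h : ∀ i, Subsingleton (Ext.{w} (Wi i) Y n)) :
    Subsingleton (Ext.{w} W Y n) := by
  suffices hz : ∀ α : Ext.{w} W Y n, α = 0 from ⟨fun a b => by rw [hz a, hz b]⟩
  intro α
  calc α = (Ext.mk₀ (𝟙 W)).comp α (zero_add n) := (Ext.mk₀_id_comp α).symm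
    _ = ((α.postcomp W (zero_add n)).comp (mk₀Hom W W)) (∑ i, p i ≫ q i) := by
        rw [htot]; rfl
    _ = ∑ i, (Ext.mk₀ (p i ≫ q i)).comp α (zero_add n) := by
        rw [map_sum]; rfl
    _ = 0 := Finset.sum_eq_zero (fun i _ => by
        have h0 : (Ext.mk₀ (q i)).comp α (zero_add n) = 0 := Subsingleton.elim _ _
        rw [← Ext.mk₀_comp_mk₀_assoc, h0, Ext.comp_zero])

lemma subsingleton_ext_right {ι : Type*} [Fintype ι] {W : C} {Wi : ι → C}
    (p : ∀ i, W ⟶ Wi i) (q : ∀ i, Wi i ⟶ W)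
    (htot : ∑ i, p i ≫ q i = 𝟙 W) (X : C) (n : ℕ)
    (h : ∀ i, Subsingleton (Ext.{w} X (Wi i) n)) :
    Subsingleton (Ext.{w} X W n) := by
  suffices hz : ∀ α : Ext.{w} X W n, α = 0 from ⟨fun a b => by rw [hz a, hz b]⟩
  intro α
  calc α = α.comp (Ext.mk₀ (𝟙 W)) (add_zero n) := (Ext.comp_mk₀_id α).symm
    _ = ((α.precomp W (add_zero n)).comp (mk₀Hom W W)) (∑ i, p i ≫ q i) := by
        rw [htot]; rfl
    _ = ∑ i, α.comp (Ext.mk₀ (p i ≫ q i)) (add_zero n) := by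
        rw [map_sum]; rfl
    _ = 0 := Finset.sum_eq_zero (fun i _ => by
        have h0 : α.comp (Ext.mk₀ (p i)) (add_zero n) = 0 := Subsingleton.elim _ _
        rw [← Ext.mk₀_comp_mk₀, ← Ext.comp_assoc_of_second_deg_zero, h0, Ext.zero_comp])

lemma T_total (T : C ⥤ C) [T.Additive] {ι : Type} [Fintype ι]
    (W : ι → C) [HasBiproduct W] :
    ∑ i, T.map (biproduct.π W i) ≫ T.map (biproduct.ι W i) = 𝟙 (T.obj (⨁ W)) := by
  have h := biproduct.total (f := W)
  calc ∑ i, T.map (biproduct.π W i) ≫ T.map (biproduct.ι W i)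
      = T.map (∑ i, biproduct.π W i ≫ biproduct.ι W i) := by
        rw [Functor.map_sum]; simp [Functor.map_comp]
    _ = 𝟙 (T.obj (⨁ W)) := by rw [h, T.map_id]

end PrioritaryAux

open PrioritaryAux in
theorem prioritary_of_resolution
    {C : Type u} [Category.{v} C] [Abelian C] [HasFiniteBiproducts C] [HasExt.{w} C]
    (m j : ℕ) (hj : j ≤ m) (A : Fin m → C)
    (T : C ⥤ C) [T.Additive]        -- T = (− ⊗ F⁻¹), the twist by F⁻¹
    (a : Fin m → ℕ) (E : C)
    -- the resolution 0 → U → V → E → 0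
    (f : (⨁ fun p : {i : Fin m // i.val < j} => ⨁ fun _ : Fin (a p.1) => A p.1) ⟶
         (⨁ fun p : {i : Fin m // j ≤ i.val} => ⨁ fun _ : Fin (a p.1) => A p.1))
    (g : (⨁ fun p : {i : Fin m // j ≤ i.val} => ⨁ fun _ : Fin (a p.1) => A p.1) ⟶ E)
    (wfg : f ≫ g = 0)
    (hse : (ShortComplex.mk f g wfg).ShortExact)
    -- tensoring with the line bundle F⁻¹ is exact
    (hse' : ((ShortComplex.mk f g wfg).map T).ShortExact)
    -- Ext¹(A_i, A_s ⊗ F⁻¹) = 0 for i ≤ j < s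
    (h1 : ∀ i s : Fin m, i.val < j → j ≤ s.val →
      Subsingleton (Ext (A i) (T.obj (A s)) 1))
    -- Ext²(A_i, A_s ⊗ F⁻¹) = 0 for j < i, s
    (h2 : ∀ i s : Fin m, j ≤ i.val → j ≤ s.val →
      Subsingleton (Ext (A i) (T.obj (A s)) 2))
    -- X is a surface: Ext³ vanishes identically
    (hdim3 : ∀ X Y : C, Subsingleton (Ext X Y 3)) :
    Subsingleton (Ext E (T.obj E) 2) := by
  let U := (⨁ fun p : {i : Fin m // i.val < j} => ⨁ fun _ : Fin (a p.1) => A p.1)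
  let V := (⨁ fun p : {i : Fin m // j ≤ i.val} => ⨁ fun _ : Fin (a p.1) => A p.1)
  -- right-decomposition of T.obj V
  have sright : ∀ (X : C) (n : ℕ),
      (∀ s : Fin m, j ≤ s.val → Subsingleton (Ext X (T.obj (A s)) n)) →
      Subsingleton (Ext X (T.obj V) n) := by
    intro X n hX
    refine subsingleton_ext_right (fun p => T.map (biproduct.π _ p))
      (fun p => T.map (biproduct.ι _ p)) (T_total T _) X n (fun pV => ?_)
    refine subsingleton_ext_right (fun k => T.map (biproduct.π _ k))
      (fun k => T.map (biproduct.ι _ k)) (T_total T _) X n (fun _ => hX pV.1 pV.2)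
  -- Ext¹(U, T V) = 0
  have sUV1 : Subsingleton (Ext U (T.obj V) 1) := by
    refine subsingleton_ext_left (biproduct.π _) (biproduct.ι _) (biproduct.total) _ _
      (fun pU => ?_)
    refine subsingleton_ext_left (biproduct.π _) (biproduct.ι _) (biproduct.total) _ _
      (fun _ => ?_)
    exact sright (A pU.1) 1 (fun s hs => h1 pU.1 s pU.2 hs)
  -- Ext²(V, T V) = 0
  have sVV2 : Subsingleton (Ext V (T.obj V) 2) := by
    refine subsingleton_ext_left (biproduct.π _) (biproduct.ι _) (biproduct.total) _ _
      (fun pV => ?_)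
    refine subsingleton_ext_left (biproduct.π _) (biproduct.ι _) (biproduct.total) _ _
      (fun _ => ?_)
    exact sright (A pV.1) 2 (fun s hs => h2 pV.1 s pV.2 hs)
  -- Ext²(E, T V) = 0 via the contravariant sequence of 0 → U → V → E → 0
  have sEV2 : Subsingleton (Ext E (T.obj V) 2) := by
    suffices hz : ∀ x : Ext E (T.obj V) 2, x = 0 from ⟨fun a b => by rw [hz a, hz b]⟩
    intro x
    have hx : (Ext.mk₀ (ShortComplex.mk f g wfg).g).comp x (zero_add 2) = 0 := @Subsingleton.elim _ sVV2 _ _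
    obtain ⟨x₁, hx₁⟩ := Ext.contravariant_sequence_exact₃ hse _ x hx (rfl : 1 + 1 = 2)
    have hx10 : x₁ = 0 := @Subsingleton.elim _ sUV1 _ _
    rw [← hx₁, hx10, Ext.comp_zero]
  -- conclude via the covariant sequence of 0 → T U → T V → T E → 0
  suffices hz : ∀ x : Ext E (T.obj E) 2, x = 0 from ⟨fun a b => by rw [hz a, hz b]⟩
  intro x
  have hx : x.comp hse'.extClass (rfl : 2 + 1 = 3) = 0 :=
    @Subsingleton.elim _ (hdim3 _ _) _ _
  obtain ⟨x₂, hx₂⟩ := Ext.covariant_sequence_exact₃ E hse' x (rfl : 2 + 1 = 3) hx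
  have hx20 : x₂ = 0 := @Subsingleton.elim _ sEV2 _ _
  rw [← hx₂, hx20, Ext.zero_comp]
  rfl
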